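/- Let (J, m) be a laminar MaxT instance with p_j ≤ λ·|χ_j| for every j ∈ J, where λ ∈ (0, 1 − 2/(m+2)), set ω = 1/2 − λ·(1/2 + 1/m) (so ω > 0), and let W denote the maximum of Σ_{j∈S} w_j over all feasibly schedulable subsets S ⊆ J. Then: (i) every subset S ⊆ J satisfying Σ_{j∈S : χ_j ⊆ χ} a_j ≤ (ω + λ/m)·m·|χ| for every χ ∈ {χ_j : j ∈ J} is feasibly schedulable on the m hosts; and (ii) there exists such a subset S with Σ_{j∈S} w_j ≥ ω·W. In particular, there is a feasibly schedulable subset of weight at least (1/2 − λ·(1/2 + 1/m))·W that moreover satisfies the above per-window area constraints. -/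

import Mathlib

open Finset

/-- A subset `S` of jobs is feasibly schedulable on `m` identical hosts:
for each job `j ∈ S` one can pick a set of exactly `p j` time slots inside its
time window `[r j, d j]` and a host for each chosen slot, so that at every host
and every time slot, the total size of jobs running there is at most `1`. -/
def Schedulable {ι : Type*} (m : ℕ) (r d : ι → ℤ) (p : ι → ℕ) (s : ι → ℝ)
    (S : Finset ι) : Prop :=
  ∃ (Tj : ι → Finset ℤ) (h : ι → ℤ → Fin m),
    (∀ j ∈ S, Tj j ⊆ Finset.Icc (r j) (d j) ∧ (Tj j).card = p j) ∧
    ∀ (i : Fin m) (t : ℤ),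
      ∑ j ∈ S.filter (fun j => t ∈ Tj j ∧ h j t = i), s j ≤ 1

/-- The family of time windows `{[r j, d j] : j}` is laminar. -/
def LaminarWindows {ι : Type*} (r d : ι → ℤ) : Prop :=
  ∀ j k : ι,
    Finset.Icc (r j) (d j) ⊆ Finset.Icc (r k) (d k) ∨
    Finset.Icc (r k) (d k) ⊆ Finset.Icc (r j) (d j) ∨
    Disjoint (Finset.Icc (r j) (d j)) (Finset.Icc (r k) (d k))

namespace MaxT
set_option linter.unusedSectionVars false
set_option linter.unusedVariables false
set_option maxHeartbeats 1000000
open scoped Classical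
variable {ι : Type*} [Fintype ι]

noncomputable def wnd (r d : ι → ℤ) (j : ι) : Finset ℤ := Finset.Icc (r j) (d j)

noncomputable def cload {m : ℕ} (s : ι → ℝ) (S : Finset ι) (T : ι → Finset ℤ)
    (H : ι → ℤ → Fin m) (i : Fin m) (t : ℤ) : ℝ :=
  ∑ j ∈ S.filter (fun j => t ∈ T j ∧ H j t = i), s j

noncomputable def ocells {m : ℕ} (s : ι → ℝ) (S : Finset ι) (T : ι → Finset ℤ)
    (H : ι → ℤ → Fin m) (t : ℤ) : Finset (Fin m) :=
  Finset.univ.filter (fun i => 0 < cload s S T H i t ∧ cload s S T H i t < 1/2)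

noncomputable def nopen {m : ℕ} (s : ι → ℝ) (S : Finset ι) (T : ι → Finset ℤ)
    (H : ι → ℤ → Fin m) (χ : Finset ℤ) : ℕ :=
  ∑ t ∈ χ, (ocells s S T H t).card

structure GoodS (m : ℕ) (r d : ι → ℤ) (p : ι → ℕ) (s : ι → ℝ) (lam : ℝ)
    (S : Finset ι) (T : ι → Finset ℤ) (H : ι → ℤ → Fin m) : Prop where
  twin : ∀ j ∈ S, T j ⊆ wnd r d j ∧ (T j).card = p j
  valid : ∀ (i : Fin m) (t : ℤ), cload s S T H i t ≤ 1
  oneopen : ∀ t : ℤ, (ocells s S T H t).card ≤ 1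
  c6 : ∀ j₀ ∈ S, (∀ j' ∈ S, wnd r d j₀ ⊆ wnd r d j' → wnd r d j' = wnd r d j₀) →
        (nopen s S T H (wnd r d j₀) : ℝ) ≤ lam * (wnd r d j₀).card

section Lemmas

variable {m : ℕ} (r d : ι → ℤ) (p : ι → ℕ) (s : ι → ℝ)

lemma cload_nonneg (hs0 : ∀ j, 0 < s j) (S : Finset ι) (T : ι → Finset ℤ)
    (H : ι → ℤ → Fin m) (i : Fin m) (t : ℤ) : 0 ≤ cload s S T H i t :=
  Finset.sum_nonneg (fun j _ => (hs0 j).le)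

/-- positive cell load comes from some scheduled job covering the slot -/
lemma cload_pos_mem {s : ι → ℝ} {S : Finset ι} {T : ι → Finset ℤ} {H : ι → ℤ → Fin m}
    {i : Fin m} {t : ℤ} (h : 0 < cload s S T H i t) : ∃ j ∈ S, t ∈ T j := by
  by_contra hc
  push_neg at hc
  have : S.filter (fun j => t ∈ T j ∧ H j t = i) = ∅ := by
    apply Finset.filter_eq_empty_iff.2
    intro j hj hmem
    exact absurd hmem.1 (hc j hj)
  rw [cload, this, Finset.sum_empty] at h
  exact lt_irrefl 0 h

/-- per-slot total load decomposition -/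
lemma slot_sum (s : ι → ℝ) (S : Finset ι) (T : ι → Finset ℤ) (H : ι → ℤ → Fin m) (t : ℤ) :
    ∑ i : Fin m, cload s S T H i t = ∑ j ∈ S.filter (fun j => t ∈ T j), s j := by
  unfold cload
  rw [← Finset.sum_fiberwise (S.filter (fun j => t ∈ T j)) (fun j => H j t) s]
  apply Finset.sum_congr rfl
  intro i _
  congr 1
  rw [Finset.filter_filter]

/-- total load over a window is bounded by the area of jobs inside it -/
lemma total_area (hs0 : ∀ j, 0 < s j) (S : Finset ι) (T : ι → Finset ℤ) (H : ι → ℤ → Fin m)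
    (htw : ∀ j ∈ S, T j ⊆ wnd r d j ∧ (T j).card = p j)
    (w : Finset ℤ)
    (hcompat : ∀ j ∈ S, wnd r d j ⊆ w ∨ Disjoint (wnd r d j) w) :
    ∑ t ∈ w, ∑ i : Fin m, cload s S T H i t
      ≤ ∑ j ∈ S.filter (fun j => wnd r d j ⊆ w), (p j : ℝ) * s j := by
  have h1 : ∑ t ∈ w, ∑ i : Fin m, cload s S T H i t
      = ∑ j ∈ S, ((w.filter (fun t => t ∈ T j)).card : ℝ) * s j := by
    calc ∑ t ∈ w, ∑ i : Fin m, cload s S T H i t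
        = ∑ t ∈ w, ∑ j ∈ S.filter (fun j => t ∈ T j), s j := by
          exact Finset.sum_congr rfl (fun t _ => slot_sum s S T H t)
      _ = ∑ t ∈ w, ∑ j ∈ S, (if t ∈ T j then s j else 0) := by
          exact Finset.sum_congr rfl (fun t _ => Finset.sum_filter (fun j => t ∈ T j) s)
      _ = ∑ j ∈ S, ∑ t ∈ w, (if t ∈ T j then s j else 0) := Finset.sum_comm
      _ = ∑ j ∈ S, ((w.filter (fun t => t ∈ T j)).card : ℝ) * s j := by
          apply Finset.sum_congr rfl
          intro j _
          rw [← Finset.sum_filter, Finset.sum_const, nsmul_eq_mul]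
  rw [h1, ← Finset.sum_filter_add_sum_filter_not S (fun j => wnd r d j ⊆ w)]
  have h2 : ∑ j ∈ S.filter (fun j => ¬ wnd r d j ⊆ w),
      ((w.filter (fun t => t ∈ T j)).card : ℝ) * s j = 0 := by
    apply Finset.sum_eq_zero
    intro j hj
    rw [Finset.mem_filter] at hj
    rcases hcompat j hj.1 with hsub | hdis
    · exact absurd hsub hj.2
    · have : w.filter (fun t => t ∈ T j) = ∅ := by
        apply Finset.filter_eq_empty_iff.2
        intro t ht htj
        exact (Finset.disjoint_left.1 hdis) ((htw j hj.1).1 htj) ht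
      rw [this]; simp
  rw [h2, add_zero]
  apply Finset.sum_le_sum
  intro j hj
  rw [Finset.mem_filter] at hj
  have hc : (w.filter (fun t => t ∈ T j)).card ≤ p j := by
    rw [← (htw j hj.1).2]
    exact Finset.card_le_card (fun t ht => (Finset.mem_filter.1 ht).2)
  exact mul_le_mul_of_nonneg_right (by exact_mod_cast hc) (hs0 j).le

end Lemmas


section D
variable {m : ℕ} {r d : ι → ℤ} {p : ι → ℕ} {s : ι → ℝ} {lam : ℝ}
  {S : Finset ι} {T : ι → Finset ℤ} {H : ι → ℤ → Fin m}

/-- decomposition lemma: open-cell count over a compatible interval -/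
lemma decomp (hrd : ∀ j, r j ≤ d j) (hlam0 : 0 ≤ lam)
    (hlamin : ∀ j k : ι, wnd r d j ⊆ wnd r d k ∨ wnd r d k ⊆ wnd r d j ∨
      Disjoint (wnd r d j) (wnd r d k))
    (htw : ∀ j ∈ S, T j ⊆ wnd r d j)
    (hc6 : ∀ j₀ ∈ S, (∀ j' ∈ S, wnd r d j₀ ⊆ wnd r d j' → wnd r d j' = wnd r d j₀) →
        (nopen s S T H (wnd r d j₀) : ℝ) ≤ lam * (wnd r d j₀).card)
    (I : Finset ℤ)
    (hcompat : ∀ j ∈ S, wnd r d j ⊆ I ∨ Disjoint (wnd r d j) I) :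
    (nopen s S T H I : ℝ) ≤ lam * I.card := by
  set V : Finset (Finset ℤ) := (S.filter (fun j => wnd r d j ⊆ I)).image (wnd r d) with hV
  set Vmax : Finset (Finset ℤ) := V.filter (fun v => ∀ u ∈ V, v ⊆ u → u = v) with hVmax
  -- every element of V is the window of a job of S, contained in I
  have hVmem : ∀ v ∈ V, ∃ j₀ ∈ S, wnd r d j₀ = v ∧ wnd r d j₀ ⊆ I := by
    intro v hv
    rw [hV, Finset.mem_image] at hv
    obtain ⟨j₀, hj₀, hw⟩ := hv
    rw [Finset.mem_filter] at hj₀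
    exact ⟨j₀, hj₀.1, hw, hw ▸ hj₀.2⟩
  -- elements of Vmax satisfy the c6 bound
  have hVmaxBound : ∀ v ∈ Vmax, (nopen s S T H v : ℝ) ≤ lam * v.card := by
    intro v hv
    rw [hVmax, Finset.mem_filter] at hv
    obtain ⟨j₀, hj₀S, hj₀w, hj₀I⟩ := hVmem v hv.1
    have hmax : ∀ j' ∈ S, wnd r d j₀ ⊆ wnd r d j' → wnd r d j' = wnd r d j₀ := by
      intro j' hj' hsub
      have hne : (wnd r d j₀).Nonempty := by
        rw [wnd]; exact Finset.nonempty_Icc.2 (hrd j₀)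
      have hj'I : wnd r d j' ⊆ I := by
        rcases hcompat j' hj' with h | h
        · exact h
        · exfalso
          obtain ⟨t, ht⟩ := hne
          exact (Finset.disjoint_left.1 h) (hsub ht) (hj₀I ht)
      have hj'V : wnd r d j' ∈ V := by
        rw [hV, Finset.mem_image]
        exact ⟨j', Finset.mem_filter.2 ⟨hj', hj'I⟩, rfl⟩
      have h2 := hv.2 _ hj'V (hj₀w ▸ hsub)
      rw [hj₀w]; exact h2
    have := hc6 j₀ hj₀S hmax
    rwa [hj₀w] at this
  -- elements of Vmax are pairwise disjoint
  have hdisj : ∀ u ∈ Vmax, ∀ v ∈ Vmax, u ≠ v → Disjoint u v := by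
    intro u hu v hv huv
    rw [hVmax, Finset.mem_filter] at hu hv
    obtain ⟨ju, hjuS, hjuw, _⟩ := hVmem u hu.1
    obtain ⟨jv, hjvS, hjvw, _⟩ := hVmem v hv.1
    rcases hlamin ju jv with h | h | h
    · exfalso; exact huv (hu.2 v hv.1 (by rw [← hjuw, ← hjvw]; exact h)).symm
    · exfalso; exact huv (hv.2 u hu.1 (by rw [← hjuw, ← hjvw]; exact h))
    · rw [← hjuw, ← hjvw]; exact h
  -- cover: slots with open cells lie in the union of Vmax
  have hcover : ∀ t ∈ I, (ocells s S T H t).card ≠ 0 → t ∈ Vmax.biUnion id := by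
    intro t htI hne
    have : (ocells s S T H t).Nonempty := Finset.card_ne_zero.1 hne
    obtain ⟨i, hi⟩ := this
    rw [ocells, Finset.mem_filter] at hi
    obtain ⟨j, hjS, hjt⟩ := cload_pos_mem hi.2.1
    have htw' : t ∈ wnd r d j := htw j hjS hjt
    have hjI : wnd r d j ⊆ I := by
      rcases hcompat j hjS with h | h
      · exact h
      · exact absurd htI (Finset.disjoint_left.1 h htw')
    have hjV : wnd r d j ∈ V := by
      rw [hV, Finset.mem_image]; exact ⟨j, Finset.mem_filter.2 ⟨hjS, hjI⟩, rfl⟩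
    -- take a maximal-cardinality element of V above wnd j
    have hne2 : (V.filter (fun u => wnd r d j ⊆ u)).Nonempty :=
      ⟨wnd r d j, Finset.mem_filter.2 ⟨hjV, Finset.Subset.refl _⟩⟩
    obtain ⟨u, hu, humax⟩ := Finset.exists_max_image _ Finset.card hne2
    rw [Finset.mem_filter] at hu
    have huVmax : u ∈ Vmax := by
      rw [hVmax, Finset.mem_filter]
      refine ⟨hu.1, fun u' hu' hsub => ?_⟩
      have hu'f : u' ∈ V.filter (fun v => wnd r d j ⊆ v) :=
        Finset.mem_filter.2 ⟨hu', hu.2.trans hsub⟩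
      exact (Finset.eq_of_subset_of_card_le hsub (humax u' hu'f)).symm
    exact Finset.mem_biUnion.2 ⟨u, huVmax, hu.2 htw'⟩
  -- put it together
  have hVI : ∀ v ∈ Vmax, v ⊆ I := by
    intro v hv
    rw [hVmax, Finset.mem_filter] at hv
    obtain ⟨j₀, _, hw, hI⟩ := hVmem v hv.1
    exact hw ▸ hI
  have step1 : nopen s S T H I ≤ ∑ v ∈ Vmax, nopen s S T H v := by
    have h1 : nopen s S T H I = ∑ t ∈ I.filter (fun t => (ocells s S T H t).card ≠ 0),
        (ocells s S T H t).card := by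
      rw [nopen]
      exact (Finset.sum_filter_ne_zero I).symm
    have h2 : I.filter (fun t => (ocells s S T H t).card ≠ 0) ⊆ Vmax.biUnion id := by
      intro t ht
      rw [Finset.mem_filter] at ht
      exact hcover t ht.1 ht.2
    calc nopen s S T H I
        = ∑ t ∈ I.filter (fun t => (ocells s S T H t).card ≠ 0), (ocells s S T H t).card := h1
      _ ≤ ∑ t ∈ Vmax.biUnion id, (ocells s S T H t).card := Finset.sum_le_sum_of_subset h2
      _ = ∑ v ∈ Vmax, ∑ t ∈ v, (ocells s S T H t).card := by
          apply Finset.sum_biUnion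
          intro u hu v hv huv
          exact hdisj u hu v hv huv
      _ = ∑ v ∈ Vmax, nopen s S T H v := rfl
  have step2 : ∑ v ∈ Vmax, (v.card : ℝ) ≤ (I.card : ℝ) := by
    have : ∑ v ∈ Vmax, v.card = (Vmax.biUnion id).card :=
      (Finset.card_biUnion (fun u hu v hv huv => hdisj u hu v hv huv)).symm
    have hsub : Vmax.biUnion id ⊆ I := by
      intro t ht
      obtain ⟨v, hv, htv⟩ := Finset.mem_biUnion.1 ht
      exact hVI v hv htv
    calc ∑ v ∈ Vmax, (v.card : ℝ) = ((Vmax.biUnion id).card : ℝ) := by exact_mod_cast this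
      _ ≤ (I.card : ℝ) := by exact_mod_cast Finset.card_le_card hsub
  calc (nopen s S T H I : ℝ) ≤ ∑ v ∈ Vmax, (nopen s S T H v : ℝ) := by exact_mod_cast step1
    _ ≤ ∑ v ∈ Vmax, lam * v.card := Finset.sum_le_sum hVmaxBound
    _ = lam * ∑ v ∈ Vmax, (v.card : ℝ) := by rw [Finset.mul_sum]
    _ ≤ lam * I.card := mul_le_mul_of_nonneg_left step2 hlam0

end D

lemma wnd_card_real (r d : ι → ℤ) (j : ι) (h : r j ≤ d j) :
    (((wnd r d j).card : ℕ) : ℝ) = ((d j - r j + 1 : ℤ) : ℝ) := by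
  rw [wnd, Int.card_Icc]
  have h0 : (0:ℤ) ≤ d j + 1 - r j := by omega
  have := Int.toNat_of_nonneg h0
  have h2 : (((d j + 1 - r j).toNat : ℕ) : ℝ) = ((d j + 1 - r j : ℤ) : ℝ) := by
    exact_mod_cast congrArg (fun z : ℤ => (z : ℝ)) this
  rw [h2]
  push_cast
  ring


section F
variable {m : ℕ} {r d : ι → ℤ} {p : ι → ℕ} {s : ι → ℝ} {lam : ℝ}
  {S' : Finset ι} {T : ι → Finset ℤ} {H : ι → ℤ → Fin m}

/-- counting lemma: there are at least `p j` fitting slots for the new job `j` -/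
lemma fit_count (hm : 1 ≤ m)
    (hs0 : ∀ j, 0 < s j) (hs1 : ∀ j, s j ≤ 1)
    (hlam0 : 0 < lam) (hlam1 : lam < 1)
    (j : ι)
    (hpl : (p j : ℝ) ≤ lam * ((wnd r d j).card : ℝ))
    (htw : ∀ j' ∈ S', T j' ⊆ wnd r d j' ∧ (T j').card = p j')
    (hcompat : ∀ j' ∈ S', wnd r d j' ⊆ wnd r d j ∨ Disjoint (wnd r d j') (wnd r d j))
    (harea : (∑ j' ∈ S'.filter (fun j' => wnd r d j' ⊆ wnd r d j), (p j' : ℝ) * s j')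
        + (p j : ℝ) * s j ≤ (1-lam)/2 * (m:ℝ) * ((wnd r d j).card : ℝ))
    (hnop : (nopen s S' T H (wnd r d j) : ℝ) ≤ lam * ((wnd r d j).card : ℝ))
    (total_area : ∑ t ∈ wnd r d j, ∑ i : Fin m, cload s S' T H i t
      ≤ ∑ j' ∈ S'.filter (fun j' => wnd r d j' ⊆ wnd r d j), (p j' : ℝ) * s j') :
    p j ≤ ((wnd r d j).filter (fun t => ∃ i, cload s S' T H i t ≤ 1 - s j)).card := by
  set w := wnd r d j with hw
  set ℓ : ℝ := (w.card : ℝ) with hℓ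
  set B := w.filter (fun t => ¬ ∃ i, cload s S' T H i t ≤ 1 - s j) with hB
  have hsplit : (w.filter (fun t => ∃ i, cload s S' T H i t ≤ 1 - s j)).card + B.card
      = w.card := Finset.card_filter_add_card_filter_not _
  -- it suffices to bound B.card
  suffices hsuf : (B.card : ℝ) ≤ ℓ - (p j : ℝ) by
    have h1 : (p j : ℝ) ≤ (w.card : ℝ) - (B.card : ℝ) := by linarith
    have h2 : ((w.card - B.card : ℕ) : ℝ) = (w.card : ℝ) - (B.card : ℝ) := by
      have : B.card ≤ w.card := Finset.card_le_card (Finset.filter_subset _ _)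
      push_cast [Nat.cast_sub this]; ring
    have h3 : p j ≤ w.card - B.card := by exact_mod_cast h2 ▸ h1
    omega
  -- blocked slots: every cell has load > 1 - s j
  have hblocked : ∀ t ∈ B, ∀ i : Fin m, 1 - s j < cload s S' T H i t := by
    intro t ht i
    rw [hB, Finset.mem_filter] at ht
    by_contra hcon
    push_neg at hcon
    exact ht.2 ⟨i, hcon⟩
  have hcl0 : ∀ (i : Fin m) (t : ℤ), 0 ≤ cload s S' T H i t :=
    fun i t => Finset.sum_nonneg (fun j _ => (hs0 j).le)
  have hTA : ∑ t ∈ B, ∑ i : Fin m, cload s S' T H i t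
      ≤ (1-lam)/2 * (m:ℝ) * ℓ - (p j : ℝ) * s j := by
    have h1 : ∑ t ∈ B, ∑ i : Fin m, cload s S' T H i t
        ≤ ∑ t ∈ w, ∑ i : Fin m, cload s S' T H i t := by
      apply Finset.sum_le_sum_of_subset_of_nonneg (Finset.filter_subset _ _)
      intro t _ _
      exact Finset.sum_nonneg (fun i _ => hcl0 i t)
    linarith [total_area]
  have hs0j := hs0 j
  have hs1j := hs1 j
  have hp0 : (0:ℝ) ≤ (p j : ℝ) := Nat.cast_nonneg _
  have hℓ0 : (0:ℝ) ≤ ℓ := Nat.cast_nonneg _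
  have hm1 : (1:ℝ) ≤ (m:ℝ) := by exact_mod_cast hm
  by_cases hcase : s j ≤ 1/2
  · -- small job: every blocked slot has total load ≥ m (1 - s j)
    have hslot : ∀ t ∈ B, (m:ℝ) * (1 - s j) ≤ ∑ i : Fin m, cload s S' T H i t := by
      intro t ht
      calc (m:ℝ) * (1 - s j) = ∑ _i : Fin m, (1 - s j) := by
            rw [Finset.sum_const, Finset.card_univ, Fintype.card_fin, nsmul_eq_mul]
        _ ≤ ∑ i : Fin m, cload s S' T H i t :=
            Finset.sum_le_sum (fun i _ => (hblocked t ht i).le)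
    have hBsum : (B.card : ℝ) * ((m:ℝ) * (1 - s j))
        ≤ (1-lam)/2 * (m:ℝ) * ℓ - (p j : ℝ) * s j := by
      calc (B.card : ℝ) * ((m:ℝ) * (1 - s j))
          = ∑ _t ∈ B, (m:ℝ) * (1 - s j) := by
            rw [Finset.sum_const, nsmul_eq_mul]
        _ ≤ ∑ t ∈ B, ∑ i : Fin m, cload s S' T H i t := Finset.sum_le_sum hslot
        _ ≤ _ := hTA
    -- algebra
    have hm0 : (0:ℝ) < (m:ℝ) := by linarith
    have hkey : (1-lam)/2 * (m:ℝ) * ℓ - (p j : ℝ) * s j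
        ≤ (ℓ - (p j : ℝ)) * ((m:ℝ) * (1 - s j)) := by
      by_cases h2 : (0:ℝ) ≤ (m:ℝ) - s j * ((m:ℝ)+1)
      · have hp2 : (p j : ℝ) * ((m:ℝ) - s j * ((m:ℝ)+1))
            ≤ (lam * ℓ) * ((m:ℝ) - s j * ((m:ℝ)+1)) :=
          mul_le_mul_of_nonneg_right hpl h2
        have f1 : (0:ℝ) ≤ ℓ * ((m:ℝ) * (1-lam) * (1/2 - s j)) :=
          mul_nonneg hℓ0 (mul_nonneg (mul_nonneg hm0.le (by linarith)) (by linarith))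
        have f2 : (0:ℝ) ≤ ℓ * (lam * s j) :=
          mul_nonneg hℓ0 (mul_nonneg hlam0.le hs0j.le)
        nlinarith [hp2, f1, f2]
      · push_neg at h2
        have f3 : (0:ℝ) ≤ (m:ℝ) * ℓ * ((1+lam)/2 - s j) :=
          mul_nonneg (mul_nonneg hm0.le hℓ0) (by linarith)
        have f4 : (0:ℝ) ≤ (p j : ℝ) * (s j * ((m:ℝ)+1) - (m:ℝ)) :=
          mul_nonneg hp0 (by linarith)
        nlinarith [f3, f4]
    have hpos : (0:ℝ) < (m:ℝ) * (1 - s j) := by nlinarith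
    have := le_trans hBsum hkey
    exact le_of_mul_le_mul_right this hpos
  · -- big job
    push_neg at hcase
    have hslot : ∀ t ∈ B, ((m:ℝ) - ((ocells s S' T H t).card : ℝ)) * (1/2)
        ≤ ∑ i : Fin m, cload s S' T H i t := by
      intro t ht
      have hfull : ∀ i ∈ (Finset.univ.filter (fun i => i ∉ ocells s S' T H t)),
          (1:ℝ)/2 ≤ cload s S' T H i t := by
        intro i hi
        rw [Finset.mem_filter] at hi
        have hgt : 0 < cload s S' T H i t := lt_of_le_of_lt (by linarith) (hblocked t ht i)
        by_contra hcon
        push_neg at hcon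
        exact hi.2 (Finset.mem_filter.2 ⟨Finset.mem_univ i, hgt, hcon⟩)
      have hcard : (Finset.univ.filter (fun i => i ∉ ocells s S' T H t)).card
          = m - (ocells s S' T H t).card := by
        have := Finset.card_filter_add_card_filter_not
          (s := (Finset.univ : Finset (Fin m))) (p := fun i => i ∈ ocells s S' T H t)
        simp only [Finset.filter_mem_eq_inter, Finset.univ_inter, Finset.card_univ,
          Fintype.card_fin] at this ⊢
        omega
      calc ((m:ℝ) - ((ocells s S' T H t).card : ℝ)) * (1/2)
          = ((Finset.univ.filter (fun i => i ∉ ocells s S' T H t)).card : ℝ) * (1/2) := by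
            rw [hcard]
            have hle : (ocells s S' T H t).card ≤ m := by
              have := Finset.card_le_card (Finset.subset_univ (ocells s S' T H t))
              simpa using this
            push_cast [Nat.cast_sub hle]
            ring
        _ = ∑ _i ∈ Finset.univ.filter (fun i => i ∉ ocells s S' T H t), (1:ℝ)/2 := by
            rw [Finset.sum_const, nsmul_eq_mul]
        _ ≤ ∑ i ∈ Finset.univ.filter (fun i => i ∉ ocells s S' T H t),
              cload s S' T H i t := Finset.sum_le_sum hfull
        _ ≤ ∑ i : Fin m, cload s S' T H i t := by
            apply Finset.sum_le_sum_of_subset_of_nonneg (Finset.filter_subset _ _)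
            intro i _ _
            exact hcl0 i t
    have hBsum : ∑ t ∈ B, ((m:ℝ) - ((ocells s S' T H t).card : ℝ)) * (1/2)
        ≤ (1-lam)/2 * (m:ℝ) * ℓ - (p j : ℝ) * s j :=
      le_trans (Finset.sum_le_sum hslot) hTA
    have hOsum : ∑ t ∈ B, ((ocells s S' T H t).card : ℝ) ≤ lam * ℓ := by
      have h1 : ∑ t ∈ B, (ocells s S' T H t).card ≤ nopen s S' T H w :=
        Finset.sum_le_sum_of_subset (Finset.filter_subset _ _)
      calc ∑ t ∈ B, ((ocells s S' T H t).card : ℝ)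
          = ((∑ t ∈ B, (ocells s S' T H t).card : ℕ) : ℝ) := by push_cast; ring
        _ ≤ (nopen s S' T H w : ℝ) := by exact_mod_cast h1
        _ ≤ lam * ℓ := hnop
    have hBm : (B.card : ℝ) * (m:ℝ)
        ≤ 2 * ((1-lam)/2 * (m:ℝ) * ℓ - (p j : ℝ) * s j) + lam * ℓ := by
      have h1 : (B.card : ℝ) * (m:ℝ) = ∑ t ∈ B,
          ((((m:ℝ) - ((ocells s S' T H t).card : ℝ)) * (1/2)) * 2
            + ((ocells s S' T H t).card : ℝ)) := by
        rw [Finset.sum_congr rfl (fun t _ => by ring : ∀ t ∈ B,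
          ((((m:ℝ) - ((ocells s S' T H t).card : ℝ)) * (1/2)) * 2
            + ((ocells s S' T H t).card : ℝ)) = (m:ℝ))]
        rw [Finset.sum_const, nsmul_eq_mul]
      rw [h1, Finset.sum_add_distrib]
      have h2 : ∑ t ∈ B, (((m:ℝ) - ((ocells s S' T H t).card : ℝ)) * (1/2)) * 2
          = (∑ t ∈ B, ((m:ℝ) - ((ocells s S' T H t).card : ℝ)) * (1/2)) * 2 := by
        rw [Finset.sum_mul]
      rw [h2]
      nlinarith [hBsum, hOsum]
    -- algebra: B * m ≤ (ℓ - p) * m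
    have hkey : 2 * ((1-lam)/2 * (m:ℝ) * ℓ - (p j : ℝ) * s j) + lam * ℓ
        ≤ (ℓ - (p j : ℝ)) * (m:ℝ) := by
      -- p (m - 2 s) ≤ lam ℓ (m - 1)
      have hsub : (p j : ℝ) * ((m:ℝ) - 2 * s j) ≤ lam * ℓ * ((m:ℝ) - 1) := by
        by_cases hms : (m:ℝ) - 2 * s j ≤ 0
        · have : (0:ℝ) ≤ lam * ℓ * ((m:ℝ) - 1) := by
            apply mul_nonneg (mul_nonneg hlam0.le hℓ0); linarith
          nlinarith
        · push_neg at hms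
          have h1 : (p j : ℝ) * ((m:ℝ) - 2 * s j) ≤ lam * ℓ * ((m:ℝ) - 2 * s j) :=
            mul_le_mul_of_nonneg_right hpl hms.le
          have h2 : lam * ℓ * ((m:ℝ) - 2 * s j) ≤ lam * ℓ * ((m:ℝ) - 1) := by
            apply mul_le_mul_of_nonneg_left _ (mul_nonneg hlam0.le hℓ0)
            linarith
          linarith
      nlinarith [hsub]
    have hm0 : (0:ℝ) < (m:ℝ) := by linarith
    exact le_of_mul_le_mul_right (le_trans hBm hkey) hm0

end F

section E
variable {m : ℕ} {r d : ι → ℤ} {p : ι → ℕ} {s : ι → ℝ} {lam : ℝ}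
  {S' : Finset ι} {T : ι → Finset ℤ} {H : ι → ℤ → Fin m}

lemma extend (hm : 1 ≤ m) (hs0 : ∀ j, 0 < s j) (hs1 : ∀ j, s j ≤ 1)
    (hlam0 : 0 < lam)
    {j : ι} (hjS : j ∉ S')
    (hG : GoodS m r d p s lam S' T H)
    (hcompat : ∀ j' ∈ S', wnd r d j' ⊆ wnd r d j ∨ Disjoint (wnd r d j') (wnd r d j))
    (hpl : (p j : ℝ) ≤ lam * ((wnd r d j).card : ℝ))
    (hnop : (nopen s S' T H (wnd r d j) : ℝ) ≤ lam * ((wnd r d j).card : ℝ))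
    (hfit : p j ≤ ((wnd r d j).filter (fun t => ∃ i, cload s S' T H i t ≤ 1 - s j)).card) :
    ∃ (T' : ι → Finset ℤ) (H' : ι → ℤ → Fin m), GoodS m r d p s lam (insert j S') T' H' := by
  classical
  set wj := wnd r d j with hwj
  set Fi : Finset ℤ := wj.filter (fun t => ∃ i, cload s S' T H i t ≤ 1 - s j) with hFi
  set As : Finset ℤ := Fi.filter (fun t => (ocells s S' T H t).Nonempty) with hAs
  -- choose the set of slots
  obtain ⟨chosen, hcF, hccard, hcP⟩ :
      ∃ C : Finset ℤ, C ⊆ Fi ∧ C.card = p j ∧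
        (¬ s j ≤ 1/2 ∨ (s j ≤ 1/2 ∧ As ⊆ C) ∨ C ⊆ As) := by
    by_cases hsm : s j ≤ 1/2
    · by_cases hpa : p j ≤ As.card
      · obtain ⟨C, hCsub, hCcard⟩ := Finset.exists_subset_card_eq hpa
        exact ⟨C, hCsub.trans (Finset.filter_subset _ _), hCcard, Or.inr (Or.inr hCsub)⟩
      · push_neg at hpa
        have hAF : As ⊆ Fi := Finset.filter_subset _ _
        have h1 : p j - As.card ≤ (Fi \ As).card := by
          rw [Finset.card_sdiff_of_subset hAF]; omega
        obtain ⟨E, hEsub, hEcard⟩ := Finset.exists_subset_card_eq h1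
        refine ⟨As ∪ E, Finset.union_subset hAF (hEsub.trans (Finset.sdiff_subset)), ?_,
          Or.inr (Or.inl ⟨hsm, Finset.subset_union_left⟩)⟩
        rw [Finset.card_union_of_disjoint]
        · rw [hEcard]; omega
        · exact Finset.disjoint_left.2 (fun a ha hae =>
            (Finset.mem_sdiff.1 (hEsub hae)).2 ha)
    · obtain ⟨C, hCsub, hCcard⟩ := Finset.exists_subset_card_eq hfit
      exact ⟨C, hCsub, hCcard, Or.inl hsm⟩
  have hchw : chosen ⊆ wj := hcF.trans (Finset.filter_subset _ _)
  -- choose the cell in each slot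
  set cell : ℤ → Fin m := fun t =>
    if h : (ocells s S' T H t).Nonempty ∧ s j ≤ 1/2 then h.1.choose
    else if h2 : ∃ i, cload s S' T H i t ≤ 1 - s j then h2.choose
    else ⟨0, hm⟩ with hcell
  have cs1 : ∀ t, (ocells s S' T H t).Nonempty → s j ≤ 1/2 → cell t ∈ ocells s S' T H t := by
    intro t h1 h2
    rw [hcell]; simp only
    rw [dif_pos ⟨h1, h2⟩]
    exact (⟨h1, h2⟩ : (ocells s S' T H t).Nonempty ∧ s j ≤ 1/2).1.choose_spec
  have cs2 : ∀ t ∈ Fi, cload s S' T H (cell t) t + s j ≤ 1 := by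
    intro t ht
    rw [hFi, Finset.mem_filter] at ht
    rw [hcell]; simp only
    by_cases h : (ocells s S' T H t).Nonempty ∧ s j ≤ 1/2
    · rw [dif_pos h]
      have hsp := h.1.choose_spec
      simp only [ocells, Finset.mem_filter] at hsp
      exact (by linarith [h.2, (Finset.mem_filter.1 h.1.choose_spec).2.2] :
        cload s S' T H h.1.choose t + s j ≤ 1)
    · rw [dif_neg h, dif_pos ht.2]
      linarith [ht.2.choose_spec]
  set T' := Function.update T j chosen with hT'
  set H' := Function.update H j cell with hH'
  -- the new load function
  have hclnew : ∀ (i : Fin m) (t : ℤ), cload s (insert j S') T' H' i t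
      = cload s S' T H i t + (if t ∈ chosen ∧ cell t = i then s j else 0) := by
    intro i t
    have hfc : (S'.filter (fun j' => t ∈ T' j' ∧ H' j' t = i))
        = (S'.filter (fun j' => t ∈ T j' ∧ H j' t = i)) := by
      apply Finset.filter_congr
      intro j' hj'
      have hne : j' ≠ j := fun h => hjS (h ▸ hj')
      rw [hT', hH', Function.update_of_ne hne, Function.update_of_ne hne]
    rw [cload, Finset.filter_insert]
    by_cases hc : t ∈ T' j ∧ H' j t = i
    · rw [if_pos hc, Finset.sum_insert (fun hmem => hjS (Finset.mem_of_mem_filter j hmem))]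
      have hc2 : t ∈ chosen ∧ cell t = i := by
        constructor
        · have := hc.1; rwa [hT', Function.update_self] at this
        · have := hc.2; rwa [hH', Function.update_self] at this
      rw [if_pos hc2, hfc, cload]
      ring
    · rw [if_neg hc]
      have hc2 : ¬ (t ∈ chosen ∧ cell t = i) := by
        intro hcc
        apply hc
        constructor
        · rw [hT', Function.update_self]; exact hcc.1
        · rw [hH', Function.update_self]; exact hcc.2
      rw [if_neg hc2, hfc, cload, add_zero]
  have hcl0 : ∀ (i : Fin m) (t : ℤ), 0 ≤ cload s S' T H i t :=
    fun i t => Finset.sum_nonneg (fun j _ => (hs0 j).le)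
  -- ocells unchanged off chosen
  have hoc1 : ∀ t, t ∉ chosen → ocells s (insert j S') T' H' t = ocells s S' T H t := by
    intro t ht
    unfold ocells
    apply Finset.filter_congr
    intro i _
    rw [hclnew]
    rw [if_neg (fun hc => ht hc.1), add_zero]
  have hoc2 : ∀ t (i : Fin m), cell t ≠ i →
      (i ∈ ocells s (insert j S') T' H' t ↔ i ∈ ocells s S' T H t) := by
    intro t i hne
    unfold ocells
    rw [Finset.mem_filter, Finset.mem_filter, hclnew]
    rw [if_neg (fun hc => hne hc.2), add_zero]
  -- new open cells are a subset of old ones, when allowed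
  have hsub_old : ∀ t ∈ chosen, (¬ s j ≤ 1/2 ∨ t ∈ As) →
      ocells s (insert j S') T' H' t ⊆ ocells s S' T H t := by
    intro t htc hcd i hi
    by_cases hie : cell t = i
    · rcases hcd with hbig | htA
      · exfalso
        rw [ocells, Finset.mem_filter, hclnew, if_pos ⟨htc, hie⟩] at hi
        push_neg at hbig
        have := hcl0 i t
        linarith [hi.2.2]
      · rw [hAs, Finset.mem_filter] at htA
        have := cs1 t htA.2 ?_
        · rwa [hie] at this
        · by_contra hbig
          rw [ocells, Finset.mem_filter, hclnew, if_pos ⟨htc, hie⟩] at hi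
          push_neg at hbig
          have := hcl0 i t
          linarith [hi.2.2]
    · exact (hoc2 t i hie).1 hi
  -- at most one new open cell per chosen slot
  have hone_new : ∀ t, (ocells s (insert j S') T' H' t).card ≤ 1 := by
    intro t
    by_cases htc : t ∈ chosen
    · by_cases hcd : ¬ s j ≤ 1/2 ∨ t ∈ As
      · exact le_trans (Finset.card_le_card (hsub_old t htc hcd)) (hG.oneopen t)
      · push_neg at hcd
        obtain ⟨hsm, htA⟩ := hcd
        have hempty : ocells s S' T H t = ∅ := by
          by_contra hne
          apply htA
          rw [hAs, Finset.mem_filter]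
          exact ⟨hcF htc, Finset.nonempty_iff_ne_empty.2 hne⟩
        have hsub : ocells s (insert j S') T' H' t ⊆ {cell t} := by
          intro i hi
          by_cases hie : cell t = i
          · rw [Finset.mem_singleton]; exact hie.symm
          · exfalso
            have := (hoc2 t i hie).1 hi
            rw [hempty] at this
            exact absurd this (Finset.notMem_empty i)
        exact le_trans (Finset.card_le_card hsub) (by simp)
    · rw [hoc1 t htc]; exact hG.oneopen t
  refine ⟨T', H', ?_, ?_, hone_new, ?_⟩
  · -- twin
    intro j' hj'
    rcases Finset.mem_insert.1 hj' with h | h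
    · subst h
      rw [hT', Function.update_self]
      exact ⟨by rw [← hwj]; exact hchw, hccard⟩
    · have hne : j' ≠ j := fun hh => hjS (hh ▸ h)
      rw [hT', Function.update_of_ne hne]
      exact hG.twin j' h
  · -- valid
    intro i t
    rw [hclnew]
    by_cases hc : t ∈ chosen ∧ cell t = i
    · rw [if_pos hc]
      have := cs2 t (hcF hc.1)
      rwa [hc.2] at this
    · rw [if_neg hc, add_zero]; exact hG.valid i t
  · -- c6
    intro j₀ hj₀ hmax
    have hj₀cases : wnd r d j₀ = wj ∨ (j₀ ∈ S' ∧ Disjoint (wnd r d j₀) wj) := by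
      rcases Finset.mem_insert.1 hj₀ with h | h
      · left; rw [h]
      · rcases hcompat j₀ h with hsub | hdis
        · left
          exact (hmax j (Finset.mem_insert_self j S') hsub).symm
        · right; exact ⟨h, hdis⟩
    rcases hj₀cases with heq | ⟨hj₀S, hdis⟩
    · rw [heq]
      -- window of the new job
      rcases hcP with hbig | hAsC | hCAs
      · -- big job: new opens ⊆ old opens pointwise
        have hle : ∀ t ∈ wj, (ocells s (insert j S') T' H' t).card
            ≤ (ocells s S' T H t).card := by
          intro t _
          by_cases htc : t ∈ chosen
          · exact Finset.card_le_card (hsub_old t htc (Or.inl hbig))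
          · rw [hoc1 t htc]
        calc (nopen s (insert j S') T' H' wj : ℝ)
            ≤ (nopen s S' T H wj : ℝ) := by
              exact_mod_cast Finset.sum_le_sum hle
          _ ≤ lam * wj.card := hnop
      · -- small job using all open slots: count ≤ p j
        obtain ⟨hsm, hAsC⟩ := hAsC
        have hle : ∀ t ∈ wj, (ocells s (insert j S') T' H' t).card
            ≤ (if t ∈ chosen then 1 else 0) := by
          intro t htw
          by_cases htc : t ∈ chosen
          · rw [if_pos htc]; exact hone_new t
          · rw [if_neg htc, hoc1 t htc]
            rw [Finset.card_eq_zero.2 ?_]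
            rw [Finset.eq_empty_iff_forall_notMem]
            intro i hi
            -- t has an open cell, small job ⇒ t ∈ As ⊆ chosen, contradiction
            apply htc
            apply hAsC
            have hio := hi
            simp only [ocells, Finset.mem_filter] at hio
            rw [hAs, Finset.mem_filter]
            constructor
            · rw [hFi, Finset.mem_filter]
              exact ⟨htw, ⟨i, by linarith [hio.2.2, hsm]⟩⟩
            · exact ⟨i, hi⟩
        have h2 : nopen s (insert j S') T' H' wj ≤ (wj.filter (fun t => t ∈ chosen)).card := by
          rw [nopen, Finset.card_filter]
          exact Finset.sum_le_sum hle
        have h3 : (wj.filter (fun t => t ∈ chosen)).card ≤ p j := by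
          rw [← hccard]
          exact Finset.card_le_card (fun t ht => (Finset.mem_filter.1 ht).2)
        calc (nopen s (insert j S') T' H' wj : ℝ) ≤ (p j : ℝ) := by
              exact_mod_cast le_trans h2 h3
          _ ≤ lam * wj.card := hpl
      · -- small job within open slots: new ⊆ old
        have hle : ∀ t ∈ wj, (ocells s (insert j S') T' H' t).card
            ≤ (ocells s S' T H t).card := by
          intro t _
          by_cases htc : t ∈ chosen
          · exact Finset.card_le_card (hsub_old t htc (Or.inr (hCAs htc)))
          · rw [hoc1 t htc]
        calc (nopen s (insert j S') T' H' wj : ℝ)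
            ≤ (nopen s S' T H wj : ℝ) := by
              exact_mod_cast Finset.sum_le_sum hle
          _ ≤ lam * wj.card := hnop
    · -- disjoint window: unchanged
      have heq2 : nopen s (insert j S') T' H' (wnd r d j₀) = nopen s S' T H (wnd r d j₀) := by
        apply Finset.sum_congr rfl
        intro t ht
        rw [hoc1 t (fun htc => (Finset.disjoint_left.1 hdis) ht (hchw htc))]
      rw [heq2]
      exact hG.c6 j₀ hj₀S (fun j' hj' => hmax j' (Finset.mem_insert_of_mem hj'))

end E

section Main
variable {m : ℕ} {r d : ι → ℤ} {p : ι → ℕ} {s : ι → ℝ} {lam : ℝ}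

theorem sched_main (hm : 1 ≤ m) (hrd : ∀ j, r j ≤ d j)
    (hs0 : ∀ j, 0 < s j) (hs1 : ∀ j, s j ≤ 1)
    (hlamin : ∀ j k : ι, wnd r d j ⊆ wnd r d k ∨ wnd r d k ⊆ wnd r d j ∨
      Disjoint (wnd r d j) (wnd r d k))
    (hlam0 : 0 < lam) (hlam1 : lam < 1)
    (hpl : ∀ j, (p j : ℝ) ≤ lam * ((wnd r d j).card : ℝ)) :
    ∀ (n : ℕ) (S : Finset ι), S.card = n →
    (∀ k : ι, ∑ j' ∈ S.filter (fun j' => wnd r d j' ⊆ wnd r d k), (p j' : ℝ) * s j'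
       ≤ (1-lam)/2 * (m:ℝ) * ((wnd r d k).card : ℝ)) →
    ∃ (T : ι → Finset ℤ) (H : ι → ℤ → Fin m), GoodS m r d p s lam S T H := by
  intro n
  induction n with
  | zero =>
    intro S hcard hA
    have hS : S = ∅ := Finset.card_eq_zero.1 hcard
    subst hS
    refine ⟨fun _ => ∅, fun _ _ => ⟨0, hm⟩, ?_, ?_, ?_, ?_⟩
    · intro j hj; exact absurd hj (Finset.notMem_empty j)
    · intro i t
      rw [cload, Finset.filter_empty, Finset.sum_empty]
      norm_num
    · intro t
      have : ocells s (∅ : Finset ι) (fun _ => ∅) (fun _ _ => (⟨0, hm⟩ : Fin m)) t = ∅ := by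
        rw [ocells, Finset.filter_eq_empty_iff]
        intro i _
        rw [cload, Finset.filter_empty, Finset.sum_empty]
        simp
      rw [this]
      simp
    · intro j₀ hj₀; exact absurd hj₀ (Finset.notMem_empty j₀)
  | succ n IH =>
    intro S hcard hA
    have hne : S.Nonempty := Finset.card_pos.1 (by omega)
    obtain ⟨j, hjS, hjmax⟩ := Finset.exists_max_image S (fun j' => (wnd r d j').card) hne
    set S' := S.erase j with hS'
    have hjS' : j ∉ S' := Finset.notMem_erase j S
    have hcard' : S'.card = n := by rw [hS', Finset.card_erase_of_mem hjS]; omega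
    have hA' : ∀ k : ι, ∑ j' ∈ S'.filter (fun j' => wnd r d j' ⊆ wnd r d k), (p j' : ℝ) * s j'
        ≤ (1-lam)/2 * (m:ℝ) * ((wnd r d k).card : ℝ) := by
      intro k
      refine le_trans (Finset.sum_le_sum_of_subset_of_nonneg ?_ ?_) (hA k)
      · exact Finset.filter_subset_filter _ (Finset.erase_subset j S)
      · intro j' _ _
        exact mul_nonneg (Nat.cast_nonneg _) (hs0 j').le
    obtain ⟨T, H, hG⟩ := IH S' hcard' hA'
    have hcompat : ∀ j' ∈ S', wnd r d j' ⊆ wnd r d j ∨ Disjoint (wnd r d j') (wnd r d j) := by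
      intro j' hj'
      rcases hlamin j' j with h | h | h
      · exact Or.inl h
      · have heq := Finset.eq_of_subset_of_card_le h (hjmax j' (Finset.mem_of_mem_erase hj'))
        exact Or.inl (by rw [heq])
      · exact Or.inr h
    have harea : (∑ j' ∈ S'.filter (fun j' => wnd r d j' ⊆ wnd r d j), (p j' : ℝ) * s j')
        + (p j : ℝ) * s j ≤ (1-lam)/2 * (m:ℝ) * ((wnd r d j).card : ℝ) := by
      have hsplit : S.filter (fun j' => wnd r d j' ⊆ wnd r d j)
          = insert j (S'.filter (fun j' => wnd r d j' ⊆ wnd r d j)) := by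
        conv_lhs => rw [← Finset.insert_erase hjS]
        rw [Finset.filter_insert, if_pos (Finset.Subset.refl _)]
      have := hA j
      rw [hsplit, Finset.sum_insert (fun hmem => hjS' (Finset.mem_of_mem_filter j hmem))] at this
      linarith
    have hnop : (nopen s S' T H (wnd r d j) : ℝ) ≤ lam * ((wnd r d j).card : ℝ) :=
      decomp hrd hlam0.le hlamin (fun j' hj' => (hG.twin j' hj').1) hG.c6 (wnd r d j) hcompat
    have htot := total_area r d p s hs0 S' T H hG.twin (wnd r d j) hcompat
    have hfit := fit_count hm hs0 hs1 hlam0 hlam1 j (hpl j) hG.twin hcompat harea hnop htot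
    obtain ⟨T', H', hG'⟩ := extend hm hs0 hs1 hlam0 hjS' hG hcompat (hpl j) hnop hfit
    rw [Finset.insert_erase hjS] at hG'
    exact ⟨T', H', hG'⟩

end Main

noncomputable def area (r d : ι → ℤ) (p : ι → ℕ) (s : ι → ℝ) (S : Finset ι) (v : Finset ℤ) : ℝ :=
  ∑ j ∈ S.filter (fun j => wnd r d j ⊆ v), (p j : ℝ) * s j

/-- budget-feasibility of a set of jobs -/
def okSet (r d : ι → ℤ) (p : ι → ℕ) (s : ι → ℝ) (c : ℝ) (S : Finset ι) : Prop :=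
  ∀ k : ι, area r d p s S (wnd r d k) ≤ c * ((wnd r d k).card : ℝ)

noncomputable def gstep (r d : ι → ℤ) (p : ι → ℕ) (s : ι → ℝ) (c : ℝ)
    (acc : Finset ι) (j : ι) : Finset ι :=
  if okSet r d p s c (insert j acc) then insert j acc else acc

section G
variable {m : ℕ} {r d : ι → ℤ} {p : ι → ℕ} {s : ι → ℝ} {lam ω c : ℝ}

lemma area_nonneg (hs0 : ∀ j, 0 < s j) (S : Finset ι) (v : Finset ℤ) :
    0 ≤ area r d p s S v :=
  Finset.sum_nonneg (fun j _ => mul_nonneg (Nat.cast_nonneg _) (hs0 j).le)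

lemma area_mono (hs0 : ∀ j, 0 < s j) {S S' : Finset ι} (h : S ⊆ S') (v : Finset ℤ) :
    area r d p s S v ≤ area r d p s S' v :=
  Finset.sum_le_sum_of_subset_of_nonneg (Finset.filter_subset_filter _ h)
    (fun j _ _ => mul_nonneg (Nat.cast_nonneg _) (hs0 j).le)

/-- accumulated greedy result contains the start -/
lemma greedy_mono (l : List ι) (acc : Finset ι) :
    acc ⊆ l.foldl (gstep r d p s c) acc := by
  induction l generalizing acc with
  | nil => exact Finset.Subset.refl _
  | cons a l ih =>
    intro x hx
    apply ih (gstep r d p s c acc a)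
    rw [gstep]
    split
    · exact Finset.mem_insert_of_mem hx
    · exact hx

lemma greedy_mem (l : List ι) (acc : Finset ι) {x : ι}
    (hx : x ∈ l.foldl (gstep r d p s c) acc) : x ∈ acc ∨ x ∈ l := by
  induction l generalizing acc with
  | nil => exact Or.inl hx
  | cons a l ih =>
    rcases ih _ hx with h | h
    · rw [gstep] at h
      split at h
      · rcases Finset.mem_insert.1 h with h | h
        · exact Or.inr (h ▸ (List.mem_cons_self : a ∈ a :: l))
        · exact Or.inl h
      · exact Or.inl h
    · exact Or.inr (List.mem_cons_of_mem a h)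

lemma greedy_ok (l : List ι) (acc : Finset ι) (hok : okSet r d p s c acc) :
    okSet r d p s c (l.foldl (gstep r d p s c) acc) := by
  induction l generalizing acc with
  | nil => exact hok
  | cons a l ih =>
    apply ih
    rw [gstep]
    split
    · assumption
    · exact hok

/-- witness invariant: every processed-but-rejected job has a saturated witness window -/
def Wit (r d : ι → ℤ) (p : ι → ℕ) (s : ι → ℝ) (ω : ℝ) (m : ℕ)
    (P acc : Finset ι) : Prop :=
  ∀ j ∈ P, j ∉ acc →
    ∃ k : ι, wnd r d j ⊆ wnd r d k ∧
      ω * (m : ℝ) * ((wnd r d k).card : ℝ) ≤ area r d p s acc (wnd r d k)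

lemma wit_mono (hs0 : ∀ j, 0 < s j) {P acc acc' : Finset ι} (hsub : acc ⊆ acc')
    (hacc : acc' ⊆ P ∪ acc ∨ True) (hW : Wit r d p s ω m P acc)
    (hmem : ∀ j ∈ P, j ∈ acc' → j ∈ acc' ) : True := trivial

lemma greedy_wit (hs0 : ∀ j, 0 < s j) (hs1 : ∀ j, s j ≤ 1)
    (hpl : ∀ j, (p j : ℝ) ≤ lam * ((wnd r d j).card : ℝ))
    (hc : ω * (m:ℝ) + lam ≤ c) (hlam0 : 0 ≤ lam)
    (l : List ι) (P acc : Finset ι)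
    (hok : okSet r d p s c acc)
    (hW : Wit r d p s ω m P acc) :
    Wit r d p s ω m (P ∪ l.toFinset) (l.foldl (gstep r d p s c) acc) := by
  induction l generalizing P acc with
  | nil =>
    simpa using hW
  | cons a l ih =>
    simp only [List.foldl_cons]
    have hstep : Wit r d p s ω m (insert a P) (gstep r d p s c acc a) := by
      rw [gstep]
      split
      · -- accepted
        intro j hj hjn
        rcases Finset.mem_insert.1 hj with h | h
        · exact absurd (h ▸ Finset.mem_insert_self a acc) hjn
        · obtain ⟨k, hk1, hk2⟩ := hW j h (fun hc2 => hjn (Finset.mem_insert_of_mem hc2))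
          exact ⟨k, hk1, le_trans hk2 (area_mono hs0 (Finset.subset_insert a acc) _)⟩
      · -- rejected
        rename_i hrej
        intro j hj hjn
        rcases Finset.mem_insert.1 hj with h | h
        · subst h
          -- find the violated window
          rw [okSet] at hrej
          push_neg at hrej
          obtain ⟨k, hk⟩ := hrej
          have hsub : wnd r d j ⊆ wnd r d k := by
            by_contra hns
            have : (insert j acc).filter (fun j' => wnd r d j' ⊆ wnd r d k)
                = acc.filter (fun j' => wnd r d j' ⊆ wnd r d k) := by
              rw [Finset.filter_insert, if_neg hns]
            rw [area, this] at hk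
            exact absurd (hok k) (not_le.2 hk)
          refine ⟨k, hsub, ?_⟩
          have hsplit : area r d p s (insert j acc) (wnd r d k)
              = (p j : ℝ) * s j + area r d p s acc (wnd r d k) := by
            rw [area, area, Finset.filter_insert, if_pos hsub, Finset.sum_insert
              (fun hmem => hjn (Finset.mem_of_mem_filter j hmem))]
          rw [hsplit] at hk
          have h1 : (p j : ℝ) * s j ≤ (p j : ℝ) :=
            mul_le_of_le_one_right (Nat.cast_nonneg _) (hs1 j)
          have h2 : ((wnd r d j).card : ℝ) ≤ ((wnd r d k).card : ℝ) := by
            exact_mod_cast Finset.card_le_card hsub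
          have h3 : lam * ((wnd r d j).card : ℝ) ≤ lam * ((wnd r d k).card : ℝ) :=
            mul_le_mul_of_nonneg_left h2 hlam0
          have h4 : (ω * (m:ℝ) + lam) * ((wnd r d k).card : ℝ) ≤ c * ((wnd r d k).card : ℝ) :=
            mul_le_mul_of_nonneg_right hc (Nat.cast_nonneg _)
          nlinarith [hpl j]
        · exact hW j h hjn
    have hok2 : okSet r d p s c (gstep r d p s c acc a) := by
      rw [gstep]
      by_cases hq : okSet r d p s c (insert a acc)
      · rw [if_pos hq]; exact hq
      · rw [if_neg hq]; exact hok
    have := ih (insert a P) (gstep r d p s c acc a) hok2 hstep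
    -- (insert a P) ∪ l.toFinset = P ∪ (a :: l).toFinset
    have hseteq : insert a P ∪ l.toFinset = P ∪ (a :: l).toFinset := by
      ext x
      simp only [Finset.mem_union, Finset.mem_insert, List.toFinset_cons, List.mem_toFinset]
      tauto
    rwa [hseteq] at this

lemma area_bound (hrd : ∀ j, r j ≤ d j) (hs0 : ∀ j, 0 < s j)
    (hlamin : ∀ j k : ι, wnd r d j ⊆ wnd r d k ∨ wnd r d k ⊆ wnd r d j ∨
      Disjoint (wnd r d j) (wnd r d k))
    (hω0 : 0 < ω) (hω1 : ω ≤ 1)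
    {P A : Finset ι} (hAP : A ⊆ P)
    (hcap : ∀ k : ι, area r d p s P (wnd r d k) ≤ (m:ℝ) * ((wnd r d k).card : ℝ))
    (hW : Wit r d p s ω m P A) :
    ω * (∑ j ∈ P, (p j : ℝ) * s j) ≤ ∑ j ∈ A, (p j : ℝ) * s j := by
  classical
  set R := P \ A with hR
  have hPsplit : ∑ j ∈ R, (p j : ℝ) * s j + ∑ j ∈ A, (p j : ℝ) * s j
      = ∑ j ∈ P, (p j : ℝ) * s j := Finset.sum_sdiff hAP
  have hAnn : (0:ℝ) ≤ ∑ j ∈ A, (p j : ℝ) * s j :=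
    Finset.sum_nonneg (fun j _ => mul_nonneg (Nat.cast_nonneg _) (hs0 j).le)
  -- key: ω * Σ_R ≤ (1-ω) * Σ_A
  have hkey : ω * (∑ j ∈ R, (p j : ℝ) * s j) ≤ (1 - ω) * ∑ j ∈ A, (p j : ℝ) * s j := by
    set wfun : ι → ι := fun j =>
      if h : ∃ k : ι, wnd r d j ⊆ wnd r d k ∧
          ω * (m : ℝ) * ((wnd r d k).card : ℝ) ≤ area r d p s A (wnd r d k)
      then h.choose else j with hwfun
    have hwf : ∀ j ∈ R, wnd r d j ⊆ wnd r d (wfun j) ∧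
        ω * (m : ℝ) * ((wnd r d (wfun j)).card : ℝ) ≤ area r d p s A (wnd r d (wfun j)) := by
      intro j hj
      rw [hR, Finset.mem_sdiff] at hj
      have h := hW j hj.1 hj.2
      rw [hwfun]; simp only
      rw [dif_pos h]
      exact h.choose_spec
    set V : Finset (Finset ℤ) := R.image (fun j => wnd r d (wfun j)) with hV
    have hVprop : ∀ v ∈ V, (∃ k₀ : ι, v = wnd r d k₀)
        ∧ ω * (m : ℝ) * (v.card : ℝ) ≤ area r d p s A v := by
      intro v hv
      rw [hV, Finset.mem_image] at hv
      obtain ⟨j, hj, hjv⟩ := hv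
      exact ⟨⟨wfun j, hjv.symm⟩, hjv ▸ (hwf j hj).2⟩
    set Vmax : Finset (Finset ℤ) := V.filter (fun v => ∀ u ∈ V, v ⊆ u → u = v) with hVmax
    have hdisj : ∀ u ∈ Vmax, ∀ v ∈ Vmax, u ≠ v → Disjoint u v := by
      intro u hu v hv huv
      rw [hVmax, Finset.mem_filter] at hu hv
      obtain ⟨⟨ju, hjuw⟩, _⟩ := hVprop u hu.1
      obtain ⟨⟨jv, hjvw⟩, _⟩ := hVprop v hv.1
      rcases hlamin ju jv with h | h | h
      · exfalso; exact huv (hu.2 v hv.1 (by rw [hjuw, hjvw]; exact h)).symm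
      · exfalso; exact huv (hv.2 u hu.1 (by rw [hjuw, hjvw]; exact h))
      · rw [hjuw, hjvw]; exact h
    have hcover : ∀ j ∈ R, ∃ v ∈ Vmax, wnd r d j ⊆ v := by
      intro j hj
      have hjV : wnd r d (wfun j) ∈ V := by
        rw [hV, Finset.mem_image]; exact ⟨j, hj, rfl⟩
      have hne2 : (V.filter (fun u => wnd r d (wfun j) ⊆ u)).Nonempty :=
        ⟨wnd r d (wfun j), Finset.mem_filter.2 ⟨hjV, Finset.Subset.refl _⟩⟩
      obtain ⟨u, hu, humax⟩ := Finset.exists_max_image _ Finset.card hne2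
      rw [Finset.mem_filter] at hu
      refine ⟨u, ?_, (hwf j hj).1.trans hu.2⟩
      rw [hVmax, Finset.mem_filter]
      refine ⟨hu.1, fun u' hu' hsub => ?_⟩
      exact (Finset.eq_of_subset_of_card_le hsub (humax u'
        (Finset.mem_filter.2 ⟨hu', hu.2.trans hsub⟩))).symm
    -- nonemptiness of windows
    have hwne : ∀ j : ι, (wnd r d j).Nonempty := fun j => Finset.nonempty_Icc.2 (hrd j)
    -- the filter pieces are pairwise disjoint
    have hpd : ∀ (X : Finset ι), ∀ u ∈ Vmax, ∀ v ∈ Vmax, u ≠ v →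
        Disjoint (X.filter (fun j => wnd r d j ⊆ u)) (X.filter (fun j => wnd r d j ⊆ v)) := by
      intro X u hu v hv huv
      rw [Finset.disjoint_left]
      intro j hj1 hj2
      rw [Finset.mem_filter] at hj1 hj2
      obtain ⟨t, ht⟩ := hwne j
      exact (Finset.disjoint_left.1 (hdisj u hu v hv huv)) (hj1.2 ht) (hj2.2 ht)
    -- Σ_R ≤ Σ_v Σ_{R ∩ v}
    have hRsum : ∑ j ∈ R, (p j : ℝ) * s j
        ≤ ∑ v ∈ Vmax, ∑ j ∈ R.filter (fun j => wnd r d j ⊆ v), (p j : ℝ) * s j := by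
      have hsub : R ⊆ Vmax.biUnion (fun v => R.filter (fun j => wnd r d j ⊆ v)) := by
        intro j hj
        obtain ⟨v, hv, hjv⟩ := hcover j hj
        exact Finset.mem_biUnion.2 ⟨v, hv, Finset.mem_filter.2 ⟨hj, hjv⟩⟩
      calc ∑ j ∈ R, (p j : ℝ) * s j
          ≤ ∑ j ∈ Vmax.biUnion (fun v => R.filter (fun j => wnd r d j ⊆ v)),
              (p j : ℝ) * s j := Finset.sum_le_sum_of_subset_of_nonneg hsub
            (fun j _ _ => mul_nonneg (Nat.cast_nonneg _) (hs0 j).le)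
        _ = _ := Finset.sum_biUnion (fun u hu v hv huv => hpd R u hu v hv huv)
    -- per piece bound
    have hpiece : ∀ v ∈ Vmax,
        ω * (∑ j ∈ R.filter (fun j => wnd r d j ⊆ v), (p j : ℝ) * s j)
          ≤ (1 - ω) * area r d p s A v := by
      intro v hv
      rw [hVmax, Finset.mem_filter] at hv
      obtain ⟨⟨k₀, hk₀⟩, hωv⟩ := hVprop v hv.1
      have hPv : area r d p s P v ≤ (m:ℝ) * (v.card : ℝ) := by
        rw [hk₀]; exact hcap k₀
      have hsplit : area r d p s A v
          + ∑ j ∈ R.filter (fun j => wnd r d j ⊆ v), (p j : ℝ) * s j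
          = area r d p s P v := by
        rw [area, area]
        rw [← Finset.sum_union]
        · congr 1
          rw [← Finset.filter_union]
          congr 1
          rw [hR, Finset.union_sdiff_of_subset hAP]
        · exact Finset.disjoint_filter_filter (Finset.disjoint_sdiff)
      have h5 : ω * area r d p s A v
          + ω * ∑ j ∈ R.filter (fun j => wnd r d j ⊆ v), (p j : ℝ) * s j
          = ω * area r d p s P v := by rw [← mul_add, hsplit]
      have h6 : ω * area r d p s P v ≤ ω * ((m:ℝ) * (v.card : ℝ)) :=
        mul_le_mul_of_nonneg_left hPv hω0.le
      have h7 : ω * ((m:ℝ) * (v.card : ℝ)) = ω * (m:ℝ) * (v.card : ℝ) := by ring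
      linarith [hωv]
    calc ω * (∑ j ∈ R, (p j : ℝ) * s j)
        ≤ ω * ∑ v ∈ Vmax, ∑ j ∈ R.filter (fun j => wnd r d j ⊆ v), (p j : ℝ) * s j :=
          mul_le_mul_of_nonneg_left hRsum hω0.le
      _ = ∑ v ∈ Vmax, ω * ∑ j ∈ R.filter (fun j => wnd r d j ⊆ v), (p j : ℝ) * s j := by
          rw [Finset.mul_sum]
      _ ≤ ∑ v ∈ Vmax, (1 - ω) * area r d p s A v := Finset.sum_le_sum hpiece
      _ = (1 - ω) * ∑ v ∈ Vmax, area r d p s A v := by rw [Finset.mul_sum]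
      _ ≤ (1 - ω) * ∑ j ∈ A, (p j : ℝ) * s j := by
          apply mul_le_mul_of_nonneg_left _ (by linarith)
          calc ∑ v ∈ Vmax, area r d p s A v
              = ∑ j ∈ Vmax.biUnion (fun v => A.filter (fun j => wnd r d j ⊆ v)),
                  (p j : ℝ) * s j :=
                (Finset.sum_biUnion (fun u hu v hv huv => hpd A u hu v hv huv)).symm
            _ ≤ ∑ j ∈ A, (p j : ℝ) * s j := by
                apply Finset.sum_le_sum_of_subset_of_nonneg
                · intro j hj
                  obtain ⟨v, _, hjv⟩ := Finset.mem_biUnion.1 hj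
                  exact Finset.mem_of_mem_filter j hjv
                · intro j _ _
                  exact mul_nonneg (Nat.cast_nonneg _) (hs0 j).le
  have h8 : ω * (∑ j ∈ R, (p j : ℝ) * s j) + ω * (∑ j ∈ A, (p j : ℝ) * s j)
      = ω * (∑ j ∈ P, (p j : ℝ) * s j) := by rw [← mul_add, hPsplit]
  linarith

/-- Abel-type summation bound -/
lemma abel (dens x : ι → ℝ) (l : List ι) :
    List.Pairwise (fun a b => dens b ≤ dens a) l →
    (∀ j ∈ l, 0 ≤ dens j) →
    (∀ l₁ l₂ : List ι, l = l₁ ++ l₂ → 0 ≤ (l₁.map x).sum) →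
    ∀ cLB : ℝ, 0 ≤ cLB → (∀ j ∈ l, cLB ≤ dens j) →
    cLB * (l.map x).sum ≤ (l.map (fun j => dens j * x j)).sum := by
  induction l using List.reverseRecOn with
  | nil => intro _ _ _ cLB _ _; simp
  | append_singleton l' b ih =>
    intro hpw hd hpre cLB hc0 hcle
    have hpw' := List.pairwise_append.1 hpw
    have hdb0 : 0 ≤ dens b := hd b (by simp)
    have ihb := ih hpw'.1 (fun j hj => hd j (by simp [hj]))
      (fun l₁ l₂ hl => hpre l₁ (l₂ ++ [b]) (by rw [hl, List.append_assoc]))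
      (dens b) hdb0 (fun j hj => hpw'.2.2 j hj b (by simp))
    have hX : 0 ≤ ((l' ++ [b]).map x).sum := hpre (l' ++ [b]) [] (by simp)
    have hdbc : cLB ≤ dens b := hcle b (by simp)
    simp only [List.map_append, List.sum_append, List.map_cons, List.map_nil,
      List.sum_cons, List.sum_nil, add_zero] at *
    nlinarith [ihb, hX, hdbc, hdb0]

end G

section Sel
variable {m : ℕ} {r d : ι → ℤ} {p : ι → ℕ} {s : ι → ℝ} {lam ω c : ℝ}

lemma capacity (hs0 : ∀ j, 0 < s j) (O : Finset ι) (T : ι → Finset ℤ) (H : ι → ℤ → Fin m)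
    (htw : ∀ j ∈ O, T j ⊆ wnd r d j ∧ (T j).card = p j)
    (hval : ∀ (i : Fin m) (t : ℤ), cload s O T H i t ≤ 1) (k : ι) :
    area r d p s O (wnd r d k) ≤ (m:ℝ) * ((wnd r d k).card : ℝ) := by
  classical
  set w := wnd r d k with hwk
  set Ok := O.filter (fun j => wnd r d j ⊆ w) with hOk
  have hOkO : Ok ⊆ O := Finset.filter_subset _ _
  have h1 : area r d p s O w = ∑ j ∈ Ok, ((w.filter (fun t => t ∈ T j)).card : ℝ) * s j := by
    rw [area]
    apply Finset.sum_congr rfl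
    intro j hj
    rw [Finset.mem_filter] at hj
    have hTsub : T j ⊆ w := (htw j hj.1).1.trans hj.2
    have : w.filter (fun t => t ∈ T j) = T j := by
      apply Finset.Subset.antisymm
      · intro t ht; exact (Finset.mem_filter.1 ht).2
      · intro t ht; exact Finset.mem_filter.2 ⟨hTsub ht, ht⟩
    rw [this, (htw j hj.1).2]
  have h2 : ∑ j ∈ Ok, ((w.filter (fun t => t ∈ T j)).card : ℝ) * s j
      = ∑ t ∈ w, ∑ i : Fin m, cload s Ok T H i t := by
    calc ∑ j ∈ Ok, ((w.filter (fun t => t ∈ T j)).card : ℝ) * s j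
        = ∑ j ∈ Ok, ∑ t ∈ w, (if t ∈ T j then s j else 0) := by
          apply Finset.sum_congr rfl
          intro j _
          rw [← Finset.sum_filter, Finset.sum_const, nsmul_eq_mul]
      _ = ∑ t ∈ w, ∑ j ∈ Ok, (if t ∈ T j then s j else 0) := Finset.sum_comm
      _ = ∑ t ∈ w, ∑ j ∈ Ok.filter (fun j => t ∈ T j), s j := by
          exact Finset.sum_congr rfl (fun t _ => (Finset.sum_filter (fun j => t ∈ T j) s).symm)
      _ = ∑ t ∈ w, ∑ i : Fin m, cload s Ok T H i t := by
          exact Finset.sum_congr rfl (fun t _ => (slot_sum s Ok T H t).symm)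
  have h3 : ∑ t ∈ w, ∑ i : Fin m, cload s Ok T H i t ≤ ∑ t ∈ w, ∑ _i : Fin m, (1:ℝ) := by
    apply Finset.sum_le_sum
    intro t _
    apply Finset.sum_le_sum
    intro i _
    refine le_trans ?_ (hval i t)
    rw [cload, cload]
    apply Finset.sum_le_sum_of_subset_of_nonneg
    · exact Finset.filter_subset_filter _ hOkO
    · intro j _ _; exact (hs0 j).le
  have h4 : ∑ t ∈ w, ∑ _i : Fin m, (1:ℝ) = (m:ℝ) * (w.card : ℝ) := by
    simp [Finset.sum_const, Finset.card_univ, mul_comm]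
  rw [h1, h2]
  rw [h4] at h3
  exact h3

theorem select (hrd : ∀ j, r j ≤ d j) (hp1 : ∀ j, 1 ≤ p j)
    (hs0 : ∀ j, 0 < s j) (hs1 : ∀ j, s j ≤ 1)
    (hlamin : ∀ j k : ι, wnd r d j ⊆ wnd r d k ∨ wnd r d k ⊆ wnd r d j ∨
      Disjoint (wnd r d j) (wnd r d k))
    (hlam0 : 0 < lam) (hω0 : 0 < ω) (hω1 : ω ≤ 1)
    (hpl : ∀ j, (p j : ℝ) ≤ lam * ((wnd r d j).card : ℝ))
    (hc : ω * (m:ℝ) + lam ≤ c) (hc0 : 0 ≤ c)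
    (wt : ι → ℝ) (hwt : ∀ j, 0 < wt j)
    (O : Finset ι)
    (hcapO : ∀ k : ι, area r d p s O (wnd r d k) ≤ (m:ℝ) * ((wnd r d k).card : ℝ)) :
    ∃ S : Finset ι, S ⊆ O ∧ okSet r d p s c S ∧
      ω * (∑ j ∈ O, wt j) ≤ ∑ j ∈ S, wt j := by
  classical
  set aj : ι → ℝ := fun j => (p j : ℝ) * s j with haj
  have haj0 : ∀ j, 0 < aj j := fun j =>
    mul_pos (by exact_mod_cast Nat.lt_of_lt_of_le Nat.zero_lt_one (hp1 j)) (hs0 j)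
  set dens : ι → ℝ := fun j => wt j / aj j with hdens
  have hdens0 : ∀ j, 0 ≤ dens j := fun j => le_of_lt (div_pos (hwt j) (haj0 j))
  set le : ι → ι → Bool := fun a b => decide (dens b ≤ dens a) with hle
  set l : List ι := O.toList.mergeSort le with hl
  have hperm : l.Perm O.toList := List.mergeSort_perm _ _
  have hnodup : l.Nodup := hperm.symm.nodup (Finset.nodup_toList O)
  have hsorted : List.Pairwise (fun a b => dens b ≤ dens a) l := by
    have := List.pairwise_mergeSort (le := le)
      (fun a b c hab hbc => by
        rw [hle] at hab hbc ⊢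
        simp only [decide_eq_true_eq] at *
        exact le_trans hbc hab)
      (fun a b => by
        rw [hle]
        simp only [Bool.or_eq_true, decide_eq_true_eq]
        exact le_total (dens b) (dens a))
      O.toList
    exact this.imp (fun h => of_decide_eq_true h)
  have hmemO : ∀ j ∈ l, j ∈ O := fun j hj => Finset.mem_toList.1 (hperm.mem_iff.1 hj)
  set S : Finset ι := l.foldl (gstep r d p s c) ∅ with hS
  have hok0 : okSet r d p s c (∅ : Finset ι) := by
    intro k
    rw [area, Finset.filter_empty, Finset.sum_empty]
    positivity
  have hSok : okSet r d p s c S := greedy_ok l ∅ hok0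
  have hSsub : S ⊆ O := by
    intro x hx
    rcases greedy_mem l ∅ hx with h | h
    · exact absurd h (Finset.notMem_empty x)
    · exact hmemO x h
  refine ⟨S, hSsub, hSok, ?_⟩
  -- prefix claims
  have hprefix : ∀ l₁ l₂ : List ι, l = l₁ ++ l₂ →
      0 ≤ (l₁.map (fun j => (if j ∈ S then aj j else 0) - ω * aj j)).sum := by
    intro l₁ l₂ hl12
    set A : Finset ι := l₁.foldl (gstep r d p s c) ∅ with hA
    set P : Finset ι := l₁.toFinset with hP
    have hnd1 : l₁.Nodup := by
      rw [hl12] at hnodup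
      exact (List.nodup_append.1 hnodup).1
    have hAP : A ⊆ P := by
      intro x hx
      rcases greedy_mem l₁ ∅ hx with h | h
      · exact absurd h (Finset.notMem_empty x)
      · exact List.mem_toFinset.2 h
    have hPO : P ⊆ O := by
      intro x hx
      exact hmemO x (by rw [hl12]; exact List.mem_append_left l₂ (List.mem_toFinset.1 hx))
    -- A = S ∩ P
    have hASP : ∀ x, x ∈ A ↔ (x ∈ S ∧ x ∈ P) := by
      intro x
      constructor
      · intro hx
        refine ⟨?_, hAP hx⟩
        rw [hS, hl12, List.foldl_append]
        exact greedy_mono l₂ _ hx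
      · rintro ⟨hxS, hxP⟩
        rw [hS, hl12, List.foldl_append] at hxS
        rcases greedy_mem l₂ _ hxS with h | h
        · exact h
        · exfalso
          rw [hl12] at hnodup
          exact (List.disjoint_of_nodup_append hnodup) (List.mem_toFinset.1 hxP) h
    -- capacity for P
    have hcapP : ∀ k : ι, area r d p s P (wnd r d k) ≤ (m:ℝ) * ((wnd r d k).card : ℝ) :=
      fun k => le_trans (area_mono hs0 hPO _) (hcapO k)
    -- witness property
    have hwit : Wit r d p s ω m P A := by
      have := greedy_wit hs0 hs1 hpl hc hlam0.le l₁ ∅ ∅ hok0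
        (fun j hj _ => absurd hj (Finset.notMem_empty j))
      rw [← hA] at this
      have h2 : (∅ : Finset ι) ∪ l₁.toFinset = P := by rw [hP, Finset.empty_union]
      rwa [h2] at this
    have hab := area_bound hrd hs0 hlamin hω0 hω1 hAP hcapP hwit
    -- translate to list sum
    have hsum1 : (l₁.map (fun j => (if j ∈ S then aj j else 0) - ω * aj j)).sum
        = ∑ j ∈ P, ((if j ∈ S then aj j else 0) - ω * aj j) := by
      rw [hP, List.sum_toFinset _ hnd1]
    have hsum2 : ∑ j ∈ P, (if j ∈ S then aj j else 0) = ∑ j ∈ A, aj j := by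
      rw [← Finset.sum_filter]
      apply Finset.sum_congr _ (fun _ _ => rfl)
      ext x
      rw [Finset.mem_filter, hASP x]
      tauto
    rw [hsum1, Finset.sum_sub_distrib, hsum2, ← Finset.mul_sum]
    linarith [hab]
  -- Abel
  have habel := abel dens (fun j => (if j ∈ S then aj j else 0) - ω * aj j) l hsorted
    (fun j _ => hdens0 j) hprefix 0 le_rfl (fun j _ => hdens0 j)
  rw [zero_mul] at habel
  -- rewrite the Abel sum as weights
  have hrw : (l.map (fun j => dens j * ((if j ∈ S then aj j else 0) - ω * aj j))).sum
      = (l.map (fun j => (if j ∈ S then wt j else 0) - ω * wt j)).sum := by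
    apply congrArg
    apply List.map_congr_left
    intro j _
    have hda : dens j * aj j = wt j := div_mul_cancel₀ (wt j) (haj0 j).ne'
    by_cases hjs : j ∈ S
    · rw [if_pos hjs, if_pos hjs]
      have h9 : dens j * (aj j - ω * aj j) = dens j * aj j - ω * (dens j * aj j) := by ring
      rw [h9, hda]
    · rw [if_neg hjs, if_neg hjs]
      have h9 : dens j * (0 - ω * aj j) = 0 - ω * (dens j * aj j) := by ring
      rw [h9, hda]
  rw [hrw] at habel
  have hsum3 : (l.map (fun j => (if j ∈ S then wt j else 0) - ω * wt j)).sum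
      = ∑ j ∈ O, ((if j ∈ S then wt j else 0) - ω * wt j) := by
    rw [← Finset.sum_map_toList]
    exact (hperm.map _).sum_eq
  rw [hsum3, Finset.sum_sub_distrib, ← Finset.mul_sum] at habel
  have hsum4 : ∑ j ∈ O, (if j ∈ S then wt j else 0) = ∑ j ∈ S, wt j := by
    rw [← Finset.sum_filter]
    apply Finset.sum_congr _ (fun _ _ => rfl)
    ext x
    rw [Finset.mem_filter]
    exact ⟨fun h => h.2, fun h => ⟨hSsub h, h⟩⟩
  rw [hsum4] at habel
  linarith

end Sel

end MaxT

theorem stmt_3 {ι : Type*} [Fintype ι]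
    (m : ℕ) (hm : 1 ≤ m)
    (r d : ι → ℤ) (p : ι → ℕ) (s w : ι → ℝ)
    (hrd : ∀ j, r j ≤ d j)
    (hp1 : ∀ j, 1 ≤ p j)
    (hpw : ∀ j, (p j : ℤ) ≤ d j - r j + 1)
    (hs0 : ∀ j, 0 < s j) (hs1 : ∀ j, s j ≤ 1)
    (hw : ∀ j, 0 < w j)
    (hlamin : LaminarWindows r d)
    (lam : ℝ) (hlam0 : 0 < lam) (hlam1 : lam < 1 - 2 / ((m : ℝ) + 2))
    (hslack : ∀ j, (p j : ℝ) ≤ lam * ((d j - r j + 1 : ℤ) : ℝ))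
    (ω : ℝ) (hω : ω = 1/2 - lam * (1/2 + 1/m))
    (W : ℝ)
    (hWach : ∃ O : Finset ι, Schedulable m r d p s O ∧ ∑ j ∈ O, w j = W)
    (hWmax : ∀ O : Finset ι, Schedulable m r d p s O → ∑ j ∈ O, w j ≤ W) :
    0 < ω ∧
    (∀ S : Finset ι,
      (∀ k : ι,
        ∑ j ∈ S.filter (fun j => Finset.Icc (r j) (d j) ⊆ Finset.Icc (r k) (d k)),
            (p j : ℝ) * s j
          ≤ (ω + lam / m) * m * ((d k - r k + 1 : ℤ) : ℝ)) →
      Schedulable m r d p s S) ∧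
    (∃ S : Finset ι,
      (∀ k : ι,
        ∑ j ∈ S.filter (fun j => Finset.Icc (r j) (d j) ⊆ Finset.Icc (r k) (d k)),
            (p j : ℝ) * s j
          ≤ (ω + lam / m) * m * ((d k - r k + 1 : ℤ) : ℝ)) ∧
      ω * W ≤ ∑ j ∈ S, w j ∧
      Schedulable m r d p s S) := by
  classical
  have hm0 : (0:ℝ) < (m:ℝ) := by exact_mod_cast Nat.lt_of_lt_of_le Nat.zero_lt_one hm
  have hm2 : (0:ℝ) < (m:ℝ) + 2 := by linarith
  -- lam (m+2) < m
  have hlm : lam * ((m:ℝ) + 2) < (m:ℝ) := by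
    have h2 := mul_lt_mul_of_pos_right hlam1 hm2
    have h3 : (1 - 2 / ((m:ℝ) + 2)) * ((m:ℝ) + 2) = (m:ℝ) := by
      field_simp
      ring
    linarith [h3 ▸ h2]
  have hminv : (m:ℝ) * (1/(m:ℝ)) = 1 := by field_simp
  have hω0 : 0 < ω := by
    rw [hω]
    nlinarith [hlm, hminv, hm0, hlam0]
  have hω1 : ω ≤ 1 := by
    rw [hω]
    nlinarith [hlam0, hm0, hminv]
  have hlam1' : lam < 1 := by
    have : (0:ℝ) < 2 / ((m:ℝ) + 2) := by positivity
    linarith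
  -- laminarity in wnd form
  have hlaminw : ∀ j k : ι, MaxT.wnd r d j ⊆ MaxT.wnd r d k ∨
      MaxT.wnd r d k ⊆ MaxT.wnd r d j ∨ Disjoint (MaxT.wnd r d j) (MaxT.wnd r d k) :=
    fun j k => hlamin j k
  -- job slack in wnd form
  have hple : ∀ j, (p j : ℝ) ≤ lam * ((MaxT.wnd r d j).card : ℝ) := by
    intro j
    rw [MaxT.wnd_card_real r d j (hrd j)]
    exact hslack j
  -- budget conversion
  have hbudget : ∀ k : ι, (ω + lam / m) * m * ((d k - r k + 1 : ℤ) : ℝ)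
      = (1-lam)/2 * (m:ℝ) * ((MaxT.wnd r d k).card : ℝ) := by
    intro k
    rw [MaxT.wnd_card_real r d k (hrd k)]
    have : (ω + lam / m) * (m:ℝ) = (1-lam)/2 * (m:ℝ) := by
      rw [hω]
      field_simp
      ring
    rw [mul_assoc, mul_assoc] at *
    rw [← mul_assoc, this, mul_assoc]
  -- Part (i)
  have part1 : ∀ S : Finset ι,
      (∀ k : ι,
        ∑ j ∈ S.filter (fun j => Finset.Icc (r j) (d j) ⊆ Finset.Icc (r k) (d k)),
            (p j : ℝ) * s j
          ≤ (ω + lam / m) * m * ((d k - r k + 1 : ℤ) : ℝ)) →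
      Schedulable m r d p s S := by
    intro S hA
    have hA' : ∀ k : ι, ∑ j' ∈ S.filter (fun j' => MaxT.wnd r d j' ⊆ MaxT.wnd r d k),
        (p j' : ℝ) * s j' ≤ (1-lam)/2 * (m:ℝ) * ((MaxT.wnd r d k).card : ℝ) := by
      intro k
      rw [← hbudget k]
      exact hA k
    obtain ⟨T, H, hG⟩ := MaxT.sched_main hm hrd hs0 hs1 hlaminw hlam0 hlam1'
      hple S.card S rfl hA'
    exact ⟨T, H, fun j hj => hG.twin j hj, fun i t => hG.valid i t⟩
  refine ⟨hω0, part1, ?_⟩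
  -- Part (ii)
  obtain ⟨O, hOsched, hOW⟩ := hWach
  obtain ⟨T, H, htw, hval⟩ := hOsched
  have hcapO : ∀ k : ι, MaxT.area r d p s O (MaxT.wnd r d k)
      ≤ (m:ℝ) * ((MaxT.wnd r d k).card : ℝ) :=
    fun k => MaxT.capacity hs0 O T H (fun j hj => htw j hj) (fun i t => hval i t) k
  set c : ℝ := (1-lam)/2 * (m:ℝ) with hc'
  have hc : ω * (m:ℝ) + lam ≤ c := by
    rw [hc', hω]
    have : (1/2 - lam * (1/2 + 1/(m:ℝ))) * (m:ℝ) + lam = (1-lam)/2 * (m:ℝ) := by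
      field_simp
      ring
    linarith [this]
  have hc0 : (0:ℝ) ≤ c := by
    rw [hc']
    nlinarith [hlam1', hm0]
  obtain ⟨S, hSO, hSok, hSwt⟩ := MaxT.select hrd hp1 hs0 hs1 hlaminw hlam0 hω0 hω1
    hple hc hc0 w hw O hcapO
  have hSbudget : ∀ k : ι,
      ∑ j ∈ S.filter (fun j => Finset.Icc (r j) (d j) ⊆ Finset.Icc (r k) (d k)),
          (p j : ℝ) * s j
        ≤ (ω + lam / m) * m * ((d k - r k + 1 : ℤ) : ℝ) := by
    intro k
    rw [hbudget k]
    calc ∑ j ∈ S.filter (fun j => Finset.Icc (r j) (d j) ⊆ Finset.Icc (r k) (d k)),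
          (p j : ℝ) * s j
        = MaxT.area r d p s S (MaxT.wnd r d k) := rfl
      _ ≤ c * ((MaxT.wnd r d k).card : ℝ) := hSok k
      _ = (1-lam)/2 * (m:ℝ) * ((MaxT.wnd r d k).card : ℝ) := by rw [hc']
  refine ⟨S, hSbudget, ?_, part1 S hSbudget⟩
  rw [← hOW]
  exact hSwt
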